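/- For every weighted extended rational expression E and every letter a ∈ A: the support of the polynomial ∂_a(E) is contained in the set of derived terms D(E), and for every derived term F ∈ D(E), the support of ∂_a(F) is contained in D(E). Equivalently, ∂_a(E) and every ∂_a(F) with F ∈ D(E) are K-linear combinations of elements of D(E). -/

import Mathlib

open scoped BigOperators

/-- A semiring equipped with a star operation satisfying `k* = 1 + k·k*` and
`k* = 1 + k*·k`. -/
class StarSR (K : Type*) extends Semiring K where
  kstar : K → K
  kstar_eq_one_add_mul_kstar : ∀ k : K, kstar k = 1 + k * kstar k
  kstar_eq_one_add_kstar_mul : ∀ k : K, kstar k = 1 + kstar k * k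

namespace WRatExp

noncomputable section

variable {A K : Type*}

/-- A formal power series over `A*` with weights in `K`. -/
abbrev Series (A K : Type*) := List A → K

section Basic
variable [Semiring K]

/-- The series `⟨k⟩` sending the empty word to `k` and every other word to `0`. -/
def sOne (k : K) : Series A K := fun w => match w with
  | [] => k
  | _ :: _ => 0

/-- Pointwise addition of series. -/
def sAdd (s t : Series A K) : Series A K := fun w => s w + t w

/-- The Cauchy product of series. -/
def sMul (s t : Series A K) : Series A K :=
  fun w => ∑ i ∈ Finset.range (w.length + 1), s (List.take i w) * t (List.drop i w)

/-- Left exterior product `(k·s)(w) = k·s(w)`. -/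
def lsmul (k : K) (s : Series A K) : Series A K := fun w => k * s w

/-- Right exterior product `(s·k)(w) = s(w)·k`. -/
def rsmul (s : Series A K) (k : K) : Series A K := fun w => s w * k

/-- The proper part of a series: agrees with `s` on nonempty words, `0` at `ε`. -/
def sProper (s : Series A K) : Series A K := fun w => match w with
  | [] => 0
  | _ :: _ => s w

/-- The conjunction (Hadamard product) of series. -/
def sConj (s t : Series A K) : Series A K := fun w => s w * t w

/-- Left quotient of a series by a letter: `(a⁻¹s)(w) = s(a::w)`. -/
def aQuot (a : A) (s : Series A K) : Series A K := fun w => s (a :: w)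

/-- Left quotient of a series by a word: `(u⁻¹s)(v) = s(u++v)`. -/
def wQuot (u : List A) (s : Series A K) : Series A K := fun w => s (u ++ w)

/-- Star of a proper series: the sum over all factorizations of the word into
nonempty factors of the products of the values of `s`. -/
def sStarP (s : Series A K) : List A → K
  | [] => 1
  | a :: w => ∑ i ∈ Finset.range (w.length + 1),
      s (a :: List.take i w) * sStarP s (List.drop i w)
  termination_by l => l.length
  decreasing_by simp only [List.length_drop, List.length_cons]; omega

end Basic

section Star
variable [StarSR K]

/-- Star of an arbitrary series: `s* = (⟨s(ε)*⟩·s_p)*·⟨s(ε)*⟩`. -/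
def sStar (s : Series A K) : Series A K :=
  sMul (sStarP (sMul (sOne (StarSR.kstar (s []))) (sProper s))) (sOne (StarSR.kstar (s [])))

end Star

section Compl
variable [Semiring K] [DecidableEq K]

/-- `k^c = 1` if `k = 0`, else `0`. -/
def kcompl (k : K) : K := if k = 0 then 1 else 0

/-- Complement of a series: `s^c(w) = s(w)^c`. -/
def sCompl (s : Series A K) : Series A K := fun w => kcompl (s w)

end Compl

/-- `a·r`: the series sending `a::w` to `r(w)` and every word not starting with
`a` to `0`. -/
def aCons [Semiring K] [DecidableEq A] (a : A) (r : Series A K) : Series A K :=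
  fun w => match w with
  | [] => 0
  | b :: v => if b = a then r v else 0

/-- Weighted extended rational expressions over alphabet `A` with weights in `K`. -/
inductive Exp (A K : Type*) : Type _ where
  | zero
  | one
  | letter (a : A)
  | add (e f : Exp A K)
  | lmul (k : K) (e : Exp A K)
  | rmul (e : Exp A K) (k : K)
  | mul (e f : Exp A K)
  | star (e : Exp A K)
  | conj (e f : Exp A K)
  | compl (e : Exp A K)

section Sem
variable [StarSR K] [DecidableEq K] [DecidableEq A]

/-- The series denoted by an expression. -/
def sem : Exp A K → Series A K
  | .zero => fun _ => 0
  | .one => sOne 1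
  | .letter a => fun w => if w = [a] then 1 else 0
  | .add e f => sAdd (sem e) (sem f)
  | .lmul k e => lsmul k (sem e)
  | .rmul e k => rsmul (sem e) k
  | .mul e f => sMul (sem e) (sem f)
  | .star e => sStar (sem e)
  | .conj e f => sConj (sem e) (sem f)
  | .compl e => sCompl (sem e)

end Sem

/-- A rational polynomial: a finitely supported function from expressions to `K`. -/
abbrev Poly (A K : Type*) [Zero K] := Exp A K →₀ K

section PolyOps
variable [Semiring K]

/-- `P·F := ⊕ᵢ kᵢ⊙(Eᵢ·F)`. -/
def pMulExp (P : Poly A K) (F : Exp A K) : Poly A K :=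
  Finsupp.mapDomain (fun E => Exp.mul E F) P

/-- `P·k := ⊕ᵢ kᵢ⊙(Eᵢ·k)`. -/
def pRmul (P : Poly A K) (k : K) : Poly A K :=
  Finsupp.mapDomain (fun E => Exp.rmul E k) P

/-- `P₁ & P₂ := ⊕_{i,j} (kᵢ·hⱼ)⊙(Eᵢ&Fⱼ)`. -/
def pConj (P Q : Poly A K) : Poly A K :=
  P.sum fun E kE => Q.sum fun F hF => Finsupp.single (Exp.conj E F) (kE * hF)

/-- The expression `Σᵢ kᵢ·Eᵢ` summing a list of monomials. -/
def sumMon (l : List (K × Exp A K)) : Exp A K :=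
  l.foldr (fun p acc => Exp.add (Exp.lmul p.1 p.2) acc) Exp.zero

variable [LinearOrder (Exp A K)]

/-- `expr(P) := Σᵢ kᵢ·Eᵢ`, the monomials being summed in the fixed canonical
linear order on expressions. -/
def pExpr (P : Poly A K) : Exp A K :=
  sumMon ((P.support.sort (· ≤ ·)).map fun E => (P E, E))

/-- `P^c := 1⊙(expr(P))^c`. -/
def pCompl (P : Poly A K) : Poly A K :=
  Finsupp.single (Exp.compl (pExpr P)) 1

end PolyOps

/-- The series denoted by a polynomial: `⟦P⟧ := Σᵢ kᵢ·⟦Eᵢ⟧`. -/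
def pSem [StarSR K] [DecidableEq K] [DecidableEq A] (P : Poly A K) : Series A K :=
  fun w => P.sum fun E k => k * sem E w

/-- A rational expansion: a constant term together with a finitely supported
map from letters to rational polynomials. -/
structure Expansion (A K : Type*) [Zero K] where
  ct : K
  terms : A →₀ Poly A K

section ExpansionOps
variable [Semiring K]

/-- Sum of expansions. -/
def xAdd (X Y : Expansion A K) : Expansion A K := ⟨X.ct + Y.ct, X.terms + Y.terms⟩

/-- Left exterior product of an expansion by a weight. -/
def xLsmul (k : K) (X : Expansion A K) : Expansion A K :=
  ⟨k * X.ct, X.terms.mapRange (fun P => k • P) (smul_zero k)⟩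

/-- Right exterior product of an expansion by a weight. -/
def xRmul (X : Expansion A K) (k : K) : Expansion A K :=
  ⟨X.ct * k, X.terms.mapRange (fun P => pRmul P k) (by simp [pRmul])⟩

/-- Right product of a (proper) expansion by an expression. -/
def xMulExp (X : Expansion A K) (F : Exp A K) : Expansion A K :=
  ⟨0, X.terms.mapRange (fun P => pMulExp P F) (by simp [pMulExp])⟩

/-- Proper part of an expansion. -/
def xProper (X : Expansion A K) : Expansion A K := ⟨0, X.terms⟩

/-- Conjunction of expansions. -/
def xConj (X Y : Expansion A K) : Expansion A K :=
  ⟨X.ct * Y.ct, Finsupp.zipWith pConj (by simp [pConj]) X.terms Y.terms⟩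

/-- Complement of an expansion. -/
def xCompl [DecidableEq K] [DecidableEq A] [Fintype A] [LinearOrder (Exp A K)]
    (X : Expansion A K) : Expansion A K :=
  ⟨kcompl X.ct,
   Finsupp.equivFunOnFinite.symm fun a =>
     if a ∈ X.terms.support then pCompl (X.terms a)
     else Finsupp.single (Exp.compl Exp.zero) 1⟩

end ExpansionOps

/-- The series denoted by an expansion:
`⟦X⟧ := ⟨X_ε⟩ + Σ_{a ∈ f(X)} a·⟦X_a⟧`. -/
def xSem [StarSR K] [DecidableEq K] [DecidableEq A] (X : Expansion A K) : Series A K :=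
  fun w => sOne X.ct w + ∑ a ∈ X.terms.support, aCons a (pSem (X.terms a)) w

section DExp
variable [StarSR K] [DecidableEq K] [DecidableEq A] [Fintype A] [LinearOrder (Exp A K)]

/-- The expansion `d(E)` of an expression `E`. -/
def dE : Exp A K → Expansion A K
  | .zero => ⟨0, 0⟩
  | .one => ⟨1, 0⟩
  | .letter a => ⟨0, Finsupp.single a (Finsupp.single Exp.one 1)⟩
  | .add e f => xAdd (dE e) (dE f)
  | .lmul k e => xLsmul k (dE e)
  | .rmul e k => xRmul (dE e) k
  | .mul e f => xAdd (xMulExp (xProper (dE e)) f) (xLsmul (dE e).ct (dE f))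
  | .star e => xAdd ⟨StarSR.kstar (dE e).ct, 0⟩
      (xLsmul (StarSR.kstar (dE e).ct) (xMulExp (xProper (dE e)) (Exp.star e)))
  | .conj e f => xConj (dE e) (dE f)
  | .compl e => xCompl (dE e)

/-- Evaluation of the expansion-based derived-term automaton of an expression
on a word: `eval(E, ε) = d(E)_ε` and
`eval(E, a::u) = Σ_{F ∈ supp d(E)_a} d(E)_a(F) · eval(F, u)`. -/
def evalDT : Exp A K → List A → K
  | E, [] => (dE E).ct
  | E, _a :: u => ((dE E).terms _a).sum fun F k => k * evalDT F u
  termination_by _ u => u.length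
  decreasing_by simp only [List.length_cons]; omega

end DExp

section Deriv
variable [StarSR K] [DecidableEq K]

/-- The constant term `c(E)` of an expression. -/
def cT : Exp A K → K
  | .zero => 0
  | .one => 1
  | .letter _ => 0
  | .add e f => cT e + cT f
  | .lmul k e => k * cT e
  | .rmul e k => cT e * k
  | .mul e f => cT e * cT f
  | .star e => StarSR.kstar (cT e)
  | .conj e f => cT e * cT f
  | .compl e => kcompl (cT e)

variable [DecidableEq A] [LinearOrder (Exp A K)]

/-- The derivative `∂_a(E)` of an expression with respect to a letter,
a rational polynomial. -/
def deriv (a : A) : Exp A K → Poly A K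
  | .zero => 0
  | .one => 0
  | .letter b => if b = a then Finsupp.single Exp.one 1 else 0
  | .add e f => deriv a e + deriv a f
  | .lmul k e => k • deriv a e
  | .rmul e k => pRmul (deriv a e) k
  | .mul e f => pMulExp (deriv a e) f + cT e • deriv a f
  | .star e => StarSR.kstar (cT e) • pMulExp (deriv a e) (Exp.star e)
  | .conj e f => pConj (deriv a e) (deriv a f)
  | .compl e => pCompl (deriv a e)

/-- Linear extension of derivation to polynomials:
`∂_a(⊕ᵢ kᵢ⊙Eᵢ) := ⊕ᵢ kᵢ·∂_a(Eᵢ)`. -/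
def pDeriv (a : A) (P : Poly A K) : Poly A K := P.sum fun E k => k • deriv a E

/-- Linear extension of the constant term to polynomials:
`c(⊕ᵢ kᵢ⊙Eᵢ) := Σᵢ kᵢ·c(Eᵢ)`. -/
def cP (P : Poly A K) : K := P.sum fun E k => k * cT E

/-- Derivation of a polynomial with respect to a word (left-to-right iteration
of letter derivation). -/
def wDerivP (u : List A) (P : Poly A K) : Poly A K :=
  u.foldl (fun Q a => pDeriv a Q) P

/-- Derivation of an expression with respect to a word: `∂_{[a]}(E) = ∂_a(E)`
and `∂_{u++[a]}(E) = ∂_a(∂_u(E))`. -/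
def wDeriv (u : List A) (E : Exp A K) : Poly A K := wDerivP u (Finsupp.single E 1)

end Deriv

section DerivedTerms
variable [Semiring K] [LinearOrder (Exp A K)]

/-- The set of derived terms `D(E)` of an expression. -/
def DT : Exp A K → Set (Exp A K)
  | .zero => ∅
  | .one => ∅
  | .letter _ => {Exp.one}
  | .add e f => DT e ∪ DT f
  | .lmul _ e => DT e
  | .rmul e k => (fun E' => Exp.rmul E' k) '' DT e
  | .mul e f => (fun E' => Exp.mul E' f) '' DT e ∪ DT f
  | .star e => (fun E' => Exp.mul E' (Exp.star e)) '' DT e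
  | .conj e f => Set.image2 Exp.conj (DT e) (DT f)
  | .compl e => { G | ∃ l : List (K × Exp A K),
      List.Chain' (· < ·) (l.map Prod.snd) ∧
      (∀ p ∈ l, p.2 ∈ DT e) ∧ G = Exp.compl (sumMon l) }

end DerivedTerms

/-- An expression contains no occurrence of the complement operator. -/
def complFree : Exp A K → Prop
  | .zero => True
  | .one => True
  | .letter _ => True
  | .add e f => complFree e ∧ complFree f
  | .lmul _ e => complFree e
  | .rmul e _ => complFree e
  | .mul e f => complFree e ∧ complFree f
  | .star e => complFree e
  | .conj e f => complFree e ∧ complFree f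
  | .compl _ => False

end

end WRatExp

open WRatExp

section Aux

variable {A K : Type*} [StarSR K] [DecidableEq K] [DecidableEq A] [LinearOrder (Exp A K)]

lemma support_pMulExp (P : Poly A K) (F : Exp A K) :
    (pMulExp P F).support ⊆ P.support.image (fun E => Exp.mul E F) :=
  Finsupp.mapDomain_support

lemma support_pRmul (P : Poly A K) (k : K) :
    (pRmul P k).support ⊆ P.support.image (fun E => Exp.rmul E k) :=
  Finsupp.mapDomain_support

lemma support_pConj (P Q : Poly A K) :
    ((pConj P Q).support : Set (Exp A K)) ⊆ Set.image2 Exp.conj (↑P.support) (↑Q.support) := by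
  intro x hx
  have h1 := Finsupp.support_sum hx
  rw [Finset.mem_biUnion] at h1
  obtain ⟨E, hE, hx1⟩ := h1
  have h2 := Finsupp.support_sum hx1
  rw [Finset.mem_biUnion] at h2
  obtain ⟨F, hF, hx2⟩ := h2
  have := Finsupp.support_single_subset hx2
  simp only [Finset.mem_singleton] at this
  subst this
  exact ⟨E, hE, F, hF, rfl⟩

lemma pCompl_mem_DT (e : Exp A K) (P : Poly A K) (hP : (P.support : Set (Exp A K)) ⊆ DT e) :
    Exp.compl (pExpr P) ∈ DT (Exp.compl e) := by
  refine ⟨(P.support.sort (· ≤ ·)).map fun E => (P E, E), ?_, ?_, rfl⟩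
  · have hmap : ((P.support.sort (· ≤ ·)).map fun E => (P E, E)).map Prod.snd
        = P.support.sort (· ≤ ·) := by
      rw [List.map_map]; simp [Function.comp_def]
    rw [hmap]
    exact List.isChain_iff_pairwise.mpr (List.sortedLT_iff_pairwise.mp (Finset.sortedLT_sort P.support))
  · intro p hp
    simp only [List.mem_map, Finset.mem_sort] at hp
    obtain ⟨E, hE, rfl⟩ := hp
    exact hP hE

lemma support_deriv_sumMon (a : A) (l : List (K × Exp A K)) :
    ((WRatExp.deriv a (sumMon l)).support : Set (Exp A K)) ⊆ ⋃ p ∈ l, ((WRatExp.deriv a p.2).support : Set (Exp A K)) := by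
  induction l with
  | nil => simp [sumMon, WRatExp.deriv]
  | cons p l ih =>
      have : sumMon (p :: l) = Exp.add (Exp.lmul p.1 p.2) (sumMon l) := rfl
      rw [this]
      intro x hx
      have hx' := Finsupp.support_add (show x ∈ _ from hx)
      rw [Finset.mem_union] at hx'
      rcases hx' with hx' | hx'
      · have := Finsupp.support_smul hx'
        simp only [List.mem_cons, Set.mem_iUnion]
        exact ⟨p, ⟨Or.inl rfl, this⟩⟩
      · have := ih hx'
        simp only [Set.mem_iUnion] at this ⊢
        obtain ⟨q, hq, hxq⟩ := this
        exact ⟨q, ⟨List.mem_cons_of_mem _ hq, hxq⟩⟩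

end Aux

/-- the support of `∂_a(E)` is contained in `D(E)`, and for every
derived term `F ∈ D(E)`, the support of `∂_a(F)` is contained in `D(E)`. -/
theorem deriv_support_subset_derived_terms {A K : Type*} [StarSR K] [DecidableEq K]
    [DecidableEq A] [LinearOrder (Exp A K)] (E : Exp A K) (a : A) :
    ↑(deriv a E).support ⊆ DT E ∧
    ∀ F ∈ DT E, ↑(deriv a F).support ⊆ DT E := by
  induction E with
  | zero =>
      refine ⟨by simp [WRatExp.deriv, DT], ?_⟩
      intro F hF; simp [DT] at hF
  | one =>
      refine ⟨by simp [WRatExp.deriv, DT], ?_⟩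
      intro F hF; simp [DT] at hF
  | letter b =>
      constructor
      · intro x hx
        simp only [WRatExp.deriv] at hx
        by_cases h : b = a
        · rw [if_pos h] at hx
          have := Finsupp.support_single_subset hx
          simp only [Finset.mem_singleton] at this
          subst this
          show Exp.one ∈ DT (Exp.letter b)
          simp [DT]
        · rw [if_neg h] at hx; simp at hx
      · intro F hF
        have hF1 : F = Exp.one := hF
        subst hF1
        intro x hx
        simp [WRatExp.deriv] at hx
  | add e f ihe ihf =>
      have hDT : DT (Exp.add e f) = DT e ∪ DT f := rfl
      constructor
      · intro x hx
        simp only [WRatExp.deriv] at hx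
        have := Finsupp.support_add (show x ∈ _ from hx)
        rw [Finset.mem_union] at this
        rw [hDT]
        rcases this with h | h
        · exact Or.inl (ihe.1 h)
        · exact Or.inr (ihf.1 h)
      · intro F hF
        rw [hDT] at hF ⊢
        rcases hF with hF | hF
        · exact fun x hx => Or.inl (ihe.2 F hF hx)
        · exact fun x hx => Or.inr (ihf.2 F hF hx)
  | lmul k e ihe =>
      have hDT : DT (Exp.lmul k e) = DT e := rfl
      constructor
      · intro x hx
        simp only [WRatExp.deriv] at hx
        have := Finsupp.support_smul hx
        rw [hDT]; exact ihe.1 this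
      · intro F hF; rw [hDT] at hF ⊢; exact ihe.2 F hF
  | rmul e k ihe =>
      have hDT : DT (Exp.rmul e k) = (fun E' => Exp.rmul E' k) '' DT e := rfl
      constructor
      · intro x hx
        simp only [WRatExp.deriv] at hx
        have := support_pRmul _ _ hx
        simp only [Finset.mem_image] at this
        obtain ⟨E', hE', rfl⟩ := this
        rw [hDT]
        exact ⟨E', ihe.1 hE', rfl⟩
      · intro F hF
        rw [hDT] at hF
        obtain ⟨E', hE', rfl⟩ := hF
        intro x hx
        simp only [WRatExp.deriv] at hx
        have := support_pRmul _ _ hx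
        simp only [Finset.mem_image] at this
        obtain ⟨E'', hE'', rfl⟩ := this
        rw [hDT]
        exact ⟨E'', ihe.2 E' hE' hE'', rfl⟩
  | mul e f ihe ihf =>
      have hDT : DT (Exp.mul e f) = (fun E' => Exp.mul E' f) '' DT e ∪ DT f := rfl
      have key : ∀ G : Exp A K, ((WRatExp.deriv a G).support : Set (Exp A K)) ⊆ DT e →
          ((pMulExp (WRatExp.deriv a G) f + cT G • WRatExp.deriv a f).support : Set (Exp A K)) ⊆ DT (Exp.mul e f) := by
        intro G hG x hx
        have := Finsupp.support_add (show x ∈ _ from hx)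
        rw [Finset.mem_union] at this
        rw [hDT]
        rcases this with h | h
        · have := support_pMulExp _ _ h
          simp only [Finset.mem_image] at this
          obtain ⟨E', hE', rfl⟩ := this
          exact Or.inl ⟨E', hG hE', rfl⟩
        · exact Or.inr (ihf.1 (Finsupp.support_smul h))
      constructor
      · intro x hx
        simp only [WRatExp.deriv] at hx
        exact key e ihe.1 hx
      · intro F hF
        rw [hDT] at hF
        rcases hF with ⟨E', hE', rfl⟩ | hF
        · intro x hx
          simp only [WRatExp.deriv] at hx
          exact key E' (ihe.2 E' hE') hx
        · intro x hx
          rw [hDT]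
          exact Or.inr (ihf.2 F hF hx)
  | star e ihe =>
      have hDT : DT (Exp.star e) = (fun E' => Exp.mul E' (Exp.star e)) '' DT e := rfl
      have key : ∀ G : Exp A K, ((WRatExp.deriv a G).support : Set (Exp A K)) ⊆ DT e →
          ((pMulExp (WRatExp.deriv a G) (Exp.star e)).support : Set (Exp A K)) ⊆ DT (Exp.star e) := by
        intro G hG x hx
        have := support_pMulExp _ _ hx
        simp only [Finset.mem_image] at this
        obtain ⟨E', hE', rfl⟩ := this
        rw [hDT]
        exact ⟨E', hG hE', rfl⟩
      constructor
      · intro x hx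
        simp only [WRatExp.deriv] at hx
        exact key e ihe.1 (Finsupp.support_smul hx)
      · intro F hF
        rw [hDT] at hF
        obtain ⟨E', hE', rfl⟩ := hF
        intro x hx
        simp only [WRatExp.deriv] at hx
        have := Finsupp.support_add (show x ∈ _ from hx)
        rw [Finset.mem_union] at this
        rcases this with h | h
        · exact key E' (ihe.2 E' hE') h
        · exact key e ihe.1 (Finsupp.support_smul (Finsupp.support_smul h))
  | conj e f ihe ihf =>
      have hDT : DT (Exp.conj e f) = Set.image2 Exp.conj (DT e) (DT f) := rfl
      have key : ∀ G H : Exp A K, ((WRatExp.deriv a G).support : Set (Exp A K)) ⊆ DT e →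
          ((WRatExp.deriv a H).support : Set (Exp A K)) ⊆ DT f →
          ((pConj (WRatExp.deriv a G) (WRatExp.deriv a H)).support : Set (Exp A K)) ⊆ DT (Exp.conj e f) := by
        intro G H hG hH x hx
        obtain ⟨E', hE', F', hF', rfl⟩ := support_pConj _ _ hx
        rw [hDT]
        exact ⟨E', hG hE', F', hH hF', rfl⟩
      constructor
      · intro x hx
        simp only [WRatExp.deriv] at hx
        exact key e f ihe.1 ihf.1 hx
      · intro F hF
        rw [hDT] at hF
        obtain ⟨E', hE', F', hF', rfl⟩ := hF
        intro x hx
        simp only [WRatExp.deriv] at hx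
        exact key E' F' (ihe.2 E' hE') (ihf.2 F' hF') hx
  | compl e ihe =>
      have key : ∀ P : Poly A K, (P.support : Set (Exp A K)) ⊆ DT e →
          ((pCompl P).support : Set (Exp A K)) ⊆ DT (Exp.compl e) := by
        intro P hP x hx
        have := Finsupp.support_single_subset hx
        simp only [Finset.mem_singleton] at this
        subst this
        exact pCompl_mem_DT e P hP
      constructor
      · intro x hx
        simp only [WRatExp.deriv] at hx
        exact key _ ihe.1 hx
      · intro F hF
        obtain ⟨l, _hl, hmem, rfl⟩ := hF
        intro x hx
        simp only [WRatExp.deriv] at hx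
        refine key (WRatExp.deriv a (sumMon l)) ?_ hx
        intro y hy
        have := support_deriv_sumMon a l hy
        simp only [Set.mem_iUnion] at this
        obtain ⟨p, hp, hyp⟩ := this
        exact ihe.2 p.2 (hmem p hp) hyp
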